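/- Let g(x) = [[a(x), b(x)],[b(x), c(x)]] and g̃(x) = [[ã(x), b̃(x)],[b̃(x), c̃(x)]] with entries in ℂ[x], det g ≠ 0, det g̃ ≠ 0, c(x) ≠ 0. Suppose there exists α ∈ ℂ \ {0} such that (1) (ã(x) − α²a(αx))·c(αx) = b̃(x)² − α²b(αx)², (2) (b̃(x) − αb(αx))/c(αx) ∈ ℂ[x], and (3) c̃(x) = c(αx). Then with p'(x) = (b̃(x) − αb(αx))/c(αx) and A = [[α,0],[p'(x),1]], one has g̃(x) = Aᵀ g(αx) A. -/
import Mathlib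


open Polynomial Matrix

/-- Let `g(x) = [[a(x),b(x)],[b(x),c(x)]]`,
`g̃(x) = [[ã(x),b̃(x)],[b̃(x),c̃(x)]]` with entries in `ℂ[x]`, `det g ≠ 0`,
`det g̃ ≠ 0`, `c(x) ≠ 0`.  If there is `α ∈ ℂ \ {0}` with
(1) `(ã(x) − α²a(αx))·c(αx) = b̃(x)² − α²b(αx)²`,
(2) `(b̃(x) − αb(αx))/c(αx) = p(x) ∈ ℂ[x]`, and
(3) `c̃(x) = c(αx)`,
then with `p'(x) := p(x)` and `A = [[α,0],[p'(x),1]]` one has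
`g̃(x) = Aᵀ g(αx) A` (an identity of matrices over `ℂ(x)`, here stated
over `ℂ[x]`). -/
theorem stmt13 (a b c ta tb tc p : Polynomial ℂ) (α : ℂ) (hα : α ≠ 0)
    (hdet : a * c - b ^ 2 ≠ 0) (htdet : ta * tc - tb ^ 2 ≠ 0) (hc : c ≠ 0)
    (h1 : (ta - C (α ^ 2) * a.comp (C α * X)) * c.comp (C α * X) =
      tb ^ 2 - C (α ^ 2) * (b.comp (C α * X)) ^ 2)
    (h2 : tb - C α * b.comp (C α * X) = p * c.comp (C α * X))
    (h3 : tc = c.comp (C α * X)) :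
    (!![ta, tb; tb, tc] : Matrix (Fin 2) (Fin 2) (Polynomial ℂ)) =
      (!![C α, 0; p, 1] : Matrix (Fin 2) (Fin 2) (Polynomial ℂ))ᵀ *
        !![a.comp (C α * X), b.comp (C α * X);
           b.comp (C α * X), c.comp (C α * X)] * !![C α, 0; p, 1] := by
  set A := a.comp (C α * X)
  set B := b.comp (C α * X)
  set Cc := c.comp (C α * X)
  have hc' : Cc ≠ 0 := by
    intro h
    apply hc
    have : (Cc).comp (C α⁻¹ * X) = c := by
      simp only [Cc, Polynomial.comp_assoc, Polynomial.mul_comp, Polynomial.C_comp,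
        Polynomial.X_comp, ← mul_assoc, ← C_mul, mul_inv_cancel₀ hα]
      simp
    rw [h] at this
    simpa using this.symm
  rw [map_pow] at h1
  have htb : tb = C α * B + p * Cc := by linear_combination h2
  have hta : ta = C α ^ 2 * A + 2 * p * (C α * B) + p ^ 2 * Cc := by
    have key : (ta - C α ^ 2 * A) * Cc =
        (C α ^ 2 * A + 2 * p * (C α * B) + p ^ 2 * Cc - C α ^ 2 * A) * Cc := by
      rw [h1, htb]; ring
    have := mul_right_cancel₀ hc' key
    linear_combination this
  have hT : (!![C α, 0; p, 1] : Matrix (Fin 2) (Fin 2) (Polynomial ℂ))ᵀ =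
      !![C α, p; 0, 1] := by
    ext i j
    fin_cases i <;> fin_cases j <;> simp
  rw [hT, Matrix.mul_fin_two, Matrix.mul_fin_two]
  have e00 : (C α * A + p * B) * C α + (C α * B + p * Cc) * p = ta := by linear_combination -hta
  have e01 : (C α * A + p * B) * 0 + (C α * B + p * Cc) * 1 = tb := by linear_combination -htb
  have e10 : (0 * A + 1 * B) * C α + (0 * B + 1 * Cc) * p = tb := by linear_combination -htb
  have e11 : (0 * A + 1 * B) * 0 + (0 * B + 1 * Cc) * 1 = tc := by linear_combination -h3
  rw [e00, e01, e10, e11]
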